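/- Fix reals x̄ and ⌊x⌋, a step size ε_RD > 0, and r = (x̄ − ⌊x⌋)/ε_RD ∈ [0,1]. Let X be a binomial random variable with N trials and success probability p ∈ (0,1] where |p − r| ≤ ε_B, and define x_QR = (X/N)·ε_RD + ⌊x⌋. Then for any α ∈ (0,2) with 3·ln(2/α) < N·p, with probability at least 1 − α it holds that |x_QR − x̄| ≤ ε_RD·(√(3·ln(2/α)/N) + ε_B). -/

import Mathlib

open MeasureTheory Real

/-- quadratic upper bound for `exp (-u)` on `u ≥ 0`. -/
lemma aux_exp_neg_le_quad (u : ℝ) (hu : 0 ≤ u) :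
    Real.exp (-u) ≤ 1 - u + u ^ 2 / 2 := by
  have h1 : 1 + u + u ^ 2 / 2 ≤ Real.exp u := by
    have := Real.sum_le_exp_of_nonneg hu 3
    simp [Finset.sum_range_succ] at this
    nlinarith [this]
  have hpos : (0 : ℝ) < 1 + u + u ^ 2 / 2 := by nlinarith
  have h2 : Real.exp (-u) ≤ 1 / (1 + u + u ^ 2 / 2) := by
    rw [Real.exp_neg, one_div]
    exact inv_anti₀ hpos h1
  refine h2.trans ?_
  rw [div_le_iff₀ hpos]
  nlinarith [sq_nonneg u, sq_nonneg (u ^ 2)]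

/-- Chernoff-style lower-tail bound for the binomial distribution, as a
statement about finite sums. -/
lemma aux_binom_lower_tail (N : ℕ) (θ t : ℝ) (hθ : 0 < θ) (hθ1 : θ ≤ 1)
    (ht : 0 < t) :
    ∑ k ∈ Finset.range (N + 1),
      (if (k : ℝ) ≤ N * θ - N * t then
        (N.choose k : ℝ) * θ ^ k * (1 - θ) ^ (N - k) else 0)
      ≤ Real.exp (-(N * t ^ 2 / (2 * θ))) := by
  set u : ℝ := t / θ with hu_def
  have hu : 0 < u := div_pos ht hθ
  have hq : (0:ℝ) ≤ 1 - θ := by linarith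
  -- step 1: termwise bound by exponentially weighted terms
  have step1 : ∑ k ∈ Finset.range (N + 1),
      (if (k : ℝ) ≤ N * θ - N * t then
        (N.choose k : ℝ) * θ ^ k * (1 - θ) ^ (N - k) else 0)
      ≤ ∑ k ∈ Finset.range (N + 1),
        Real.exp (u * (N * θ - N * t)) *
          ((θ * Real.exp (-u)) ^ k * (1 - θ) ^ (N - k) * (N.choose k : ℝ)) := by
    apply Finset.sum_le_sum
    intro k _
    have hterm : (0:ℝ) ≤ (N.choose k : ℝ) * θ ^ k * (1 - θ) ^ (N - k) :=
      mul_nonneg (mul_nonneg (Nat.cast_nonneg _) (pow_nonneg hθ.le _)) (pow_nonneg hq _)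
    by_cases hk : (k : ℝ) ≤ N * θ - N * t
    · simp only [hk, if_true]
      have h1 : (1:ℝ) ≤ Real.exp (u * (N * θ - N * t) + (-u) * k) := by
        apply Real.one_le_exp
        have : (0:ℝ) ≤ u * (N * θ - N * t - k) := mul_nonneg hu.le (by linarith)
        nlinarith [this]
      have heq : Real.exp (u * (N * θ - N * t)) *
          ((θ * Real.exp (-u)) ^ k * (1 - θ) ^ (N - k) * (N.choose k : ℝ))
          = Real.exp (u * (N * θ - N * t) + (-u) * k) *
            ((N.choose k : ℝ) * θ ^ k * (1 - θ) ^ (N - k)) := by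
        rw [mul_pow, ← Real.exp_nat_mul, Real.exp_add]
        ring_nf
      rw [heq]
      nlinarith [h1, hterm]
    · simp only [hk, if_false]
      positivity
  refine step1.trans ?_
  -- step 2: binomial theorem
  have step2 : ∑ k ∈ Finset.range (N + 1),
      Real.exp (u * (N * θ - N * t)) *
        ((θ * Real.exp (-u)) ^ k * (1 - θ) ^ (N - k) * (N.choose k : ℝ))
      = Real.exp (u * (N * θ - N * t)) * (θ * Real.exp (-u) + (1 - θ)) ^ N := by
    rw [← Finset.mul_sum, add_pow]
  rw [step2]
  -- step 3: bound the base by an exponential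
  have hbase_nonneg : (0:ℝ) ≤ θ * Real.exp (-u) + (1 - θ) := by positivity
  have step3 : θ * Real.exp (-u) + (1 - θ) ≤ Real.exp (θ * (Real.exp (-u) - 1)) := by
    have := Real.add_one_le_exp (θ * (Real.exp (-u) - 1))
    linarith
  have step4 : (θ * Real.exp (-u) + (1 - θ)) ^ N ≤ Real.exp (N * (θ * (Real.exp (-u) - 1))) := by
    calc (θ * Real.exp (-u) + (1 - θ)) ^ N
        ≤ (Real.exp (θ * (Real.exp (-u) - 1))) ^ N :=
          pow_le_pow_left₀ hbase_nonneg step3 N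
      _ = Real.exp (N * (θ * (Real.exp (-u) - 1))) := by
          rw [← Real.exp_nat_mul]
  calc Real.exp (u * (N * θ - N * t)) * (θ * Real.exp (-u) + (1 - θ)) ^ N
      ≤ Real.exp (u * (N * θ - N * t)) * Real.exp (N * (θ * (Real.exp (-u) - 1))) := by
        apply mul_le_mul_of_nonneg_left step4 (Real.exp_nonneg _)
    _ = Real.exp (u * (N * θ - N * t) + N * (θ * (Real.exp (-u) - 1))) := by
        rw [← Real.exp_add]
    _ ≤ Real.exp (-(N * t ^ 2 / (2 * θ))) := by
        apply Real.exp_le_exp.mpr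
        have hquad : Real.exp (-u) - 1 ≤ -u + u ^ 2 / 2 := by
          have := aux_exp_neg_le_quad u hu.le
          linarith
        have hNnn : (0:ℝ) ≤ (N:ℝ) := Nat.cast_nonneg _
        have key : u * (N * θ - N * t) + N * (θ * (-u + u ^ 2 / 2))
            = -(N * t ^ 2 / (2 * θ)) := by
          rw [hu_def]
          field_simp
          ring
        have : N * (θ * (Real.exp (-u) - 1)) ≤ N * (θ * (-u + u ^ 2 / 2)) := by
          apply mul_le_mul_of_nonneg_left _ hNnn
          exact mul_le_mul_of_nonneg_left hquad hθ.le
        linarith [this, key]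

/-- Error bound for quantum rounding with biased rotations: if each sample
rounds up with a biased probability `p` with `|p - r| ≤ ε_B` instead of the
ideal `r = (x̄ - ⌊x⌋)/ε_RD ∈ [0,1]`, so `X ~ Binomial(N, p)`, then
`x_QR = (X/N)·ε_RD + ⌊x⌋` satisfies
`|x_QR - x̄| ≤ ε_RD·(√(3·ln(2/α)/N) + ε_B)` with probability at least `1 - α`. -/
theorem quantum_rounding_error_biased
    {Ω : Type*} [MeasurableSpace Ω] (μ : Measure Ω) [IsProbabilityMeasure μ]
    (xbar xfl εRD : ℝ) (hε : 0 < εRD)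
    (r : ℝ) (hrdef : r = (xbar - xfl) / εRD) (hr : r ∈ Set.Icc (0 : ℝ) 1)
    (p εB : ℝ) (hp : p ∈ Set.Ioc (0 : ℝ) 1) (hbias : |p - r| ≤ εB)
    (N : ℕ) (X : Ω → ℕ) (hXmeas : Measurable X)
    (hX : ∀ k : ℕ, μ {ω | X ω = k} =
      ENNReal.ofReal ((N.choose k : ℝ) * p ^ k * (1 - p) ^ (N - k)))
    (α : ℝ) (hα : α ∈ Set.Ioo (0 : ℝ) 2)
    (h : 3 * Real.log (2 / α) < N * p) :
    μ {ω | |((X ω : ℝ) / N * εRD + xfl) - xbar| ≤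
        εRD * (Real.sqrt (3 * Real.log (2 / α) / N) + εB)} ≥
      ENNReal.ofReal (1 - α) := by
  classical
  obtain ⟨hα0, hα2⟩ := hα
  obtain ⟨hp0, hp1⟩ := hp
  set L := Real.log (2 / α) with hL_def
  have hL : 0 < L := Real.log_pos (by rw [lt_div_iff₀ hα0]; linarith)
  have hNpos : 0 < (N : ℝ) * p := lt_trans (by positivity) h
  have hN : 0 < (N : ℝ) := by
    rcases Nat.eq_zero_or_pos N with h0 | h0
    · subst h0; simp at hNpos
    · exact_mod_cast h0
  set t : ℝ := Real.sqrt (3 * L / N) with ht_def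
  have ht2 : t ^ 2 = 3 * L / N := Real.sq_sqrt (by positivity)
  have ht : 0 < t := Real.sqrt_pos.mpr (by positivity)
  set b : ℕ → ℝ := fun k => (N.choose k : ℝ) * p ^ k * (1 - p) ^ (N - k) with hb_def
  have hb : ∀ k, 0 ≤ b k := fun k =>
    mul_nonneg (mul_nonneg (Nat.cast_nonneg _) (pow_nonneg hp0.le _))
      (pow_nonneg (by linarith) _)
  -- generic bound for events defined through X
  have key : ∀ P : ℕ → Prop,
      μ {ω | P (X ω)} ≤
        ENNReal.ofReal (∑ k ∈ Finset.range (N + 1), if P k then b k else 0) := by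
    intro P
    have hcalc : μ {ω | P (X ω)} ≤
        ∑ k ∈ Finset.range (N + 1), μ {ω | X ω = k ∧ P k} := by
      calc μ {ω | P (X ω)} ≤ μ (⋃ k, {ω | X ω = k ∧ P k}) :=
            measure_mono (fun ω hω => Set.mem_iUnion.mpr ⟨X ω, rfl, hω⟩)
        _ ≤ ∑' k, μ {ω | X ω = k ∧ P k} := measure_iUnion_le _
        _ = ∑ k ∈ Finset.range (N + 1), μ {ω | X ω = k ∧ P k} := by
            apply tsum_eq_sum
            intro k hk
            have hkN : N < k := by
              by_contra hcon
              exact hk (Finset.mem_range.mpr (by omega))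
            have h0 : μ {ω | X ω = k} = 0 := by
              rw [hX k, Nat.choose_eq_zero_of_lt hkN]
              simp
            exact le_antisymm (h0 ▸ measure_mono (fun ω hω => hω.1)) (zero_le')
    refine hcalc.trans ?_
    rw [ENNReal.ofReal_sum_of_nonneg (fun k _ => by split_ifs <;> [exact hb k; exact le_rfl])]
    apply Finset.sum_le_sum
    intro k _
    by_cases hPk : P k
    · simp only [hPk, if_true]
      exact (measure_mono (fun ω hω => hω.1)).trans (le_of_eq (hX k))
    · simp only [hPk, if_false]
      have : {ω | X ω = k ∧ P k} = ∅ := by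
        ext ω; simp [hPk]
      simp [this]
  -- lower tail bound
  have hexp_le : ∀ θ : ℝ, 0 < θ → θ ≤ 1 →
      Real.exp (-((N : ℝ) * t ^ 2 / (2 * θ))) ≤ α / 2 := by
    intro θ hθ hθ1
    have hNt2 : (N : ℝ) * t ^ 2 = 3 * L := by
      rw [ht2]; field_simp
    have h1 : Real.exp (-((N : ℝ) * t ^ 2 / (2 * θ))) ≤ Real.exp (-L) := by
      apply Real.exp_le_exp.mpr
      rw [hNt2]
      rw [neg_le_neg_iff, le_div_iff₀ (by linarith)]
      nlinarith
    refine h1.trans ?_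
    rw [hL_def, Real.exp_neg, Real.exp_log (by positivity), inv_div]
  have hs1 : (∑ k ∈ Finset.range (N + 1),
      if (k : ℝ) < N * p - N * t then b k else 0) ≤ α / 2 := by
    have hle : (∑ k ∈ Finset.range (N + 1),
        if (k : ℝ) < N * p - N * t then b k else 0) ≤
        ∑ k ∈ Finset.range (N + 1),
          if (k : ℝ) ≤ N * p - N * t then b k else 0 := by
      apply Finset.sum_le_sum
      intro k _
      split_ifs with h1 h2 h2
      · exact le_refl _
      · exact absurd h1.le h2
      · exact hb k
      · exact le_refl _
    refine hle.trans ((aux_binom_lower_tail N p t hp0 hp1 ht).trans (hexp_le p hp0 hp1))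
  have hs2 : (∑ k ∈ Finset.range (N + 1),
      if N * p + N * t < (k : ℝ) then b k else 0) ≤ α / 2 := by
    by_cases hq0 : p = 1
    · have : (∑ k ∈ Finset.range (N + 1),
          if N * p + N * t < (k : ℝ) then b k else 0) = 0 := by
        apply Finset.sum_eq_zero
        intro k hk
        have hkN : (k : ℝ) ≤ N := by
          exact_mod_cast Nat.lt_succ_iff.mp (Finset.mem_range.mp hk)
        have : ¬ (N * p + N * t < (k : ℝ)) := by
          rw [hq0]; push_neg; nlinarith
        simp [this]
      rw [this]; positivity
    · have hq : 0 < 1 - p := lt_of_le_of_ne (by linarith) (by intro hc; exact hq0 (by linarith))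
      have hq1 : 1 - p ≤ 1 := by linarith
      have hrefl : (∑ k ∈ Finset.range (N + 1),
          if N * p + N * t < (k : ℝ) then b k else 0) =
          ∑ j ∈ Finset.range (N + 1),
            (if N * p + N * t < ((N - j : ℕ) : ℝ) then b (N - j) else 0) := by
        rw [← Finset.sum_range_reflect (fun k => if N * p + N * t < (k : ℝ) then b k else 0) (N + 1)]
        have e : ∀ j, N + 1 - 1 - j = N - j := fun j => by omega
        simp only [e]
      have hle : (∑ j ∈ Finset.range (N + 1),
          (if N * p + N * t < ((N - j : ℕ) : ℝ) then b (N - j) else 0)) ≤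
          ∑ j ∈ Finset.range (N + 1),
            (if (j : ℝ) ≤ N * (1 - p) - N * t then
              (N.choose j : ℝ) * (1 - p) ^ j * (1 - (1 - p)) ^ (N - j) else 0) := by
        apply Finset.sum_le_sum
        intro j hj
        have hjN : j ≤ N := Nat.lt_succ_iff.mp (Finset.mem_range.mp hj)
        have hcast : ((N - j : ℕ) : ℝ) = (N : ℝ) - j := by
          rw [Nat.cast_sub hjN]
        by_cases hcond : N * p + N * t < ((N - j : ℕ) : ℝ)
        · have hcond2 : (j : ℝ) ≤ N * (1 - p) - N * t := by
            rw [hcast] at hcond; nlinarith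
          simp only [hcond, hcond2, if_true]
          have hbval : b (N - j) = (N.choose j : ℝ) * (1 - p) ^ j * (1 - (1 - p)) ^ (N - j) := by
            rw [hb_def]
            simp only []
            rw [Nat.choose_symm hjN, Nat.sub_sub_self hjN]
            ring_nf
          rw [hbval]
        · simp only [hcond, if_false]
          split_ifs
          · exact mul_nonneg (mul_nonneg (Nat.cast_nonneg _)
              (pow_nonneg (by linarith) _)) (pow_nonneg (by linarith) _)
          · exact le_refl _
      calc (∑ k ∈ Finset.range (N + 1),
            if N * p + N * t < (k : ℝ) then b k else 0)
          = _ := hrefl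
        _ ≤ _ := hle
        _ ≤ Real.exp (-((N : ℝ) * t ^ 2 / (2 * (1 - p)))) :=
            aux_binom_lower_tail N (1 - p) t hq hq1 ht
        _ ≤ α / 2 := hexp_le (1 - p) hq hq1
  -- measure of the bad event
  set bad : Set Ω := {ω | (X ω : ℝ) < N * p - N * t ∨ N * p + N * t < (X ω : ℝ)}
    with hbad_def
  have hbad_meas : MeasurableSet bad := by
    have : bad = X ⁻¹' {k : ℕ | (k : ℝ) < N * p - N * t ∨ N * p + N * t < (k : ℝ)} := rfl
    rw [this]
    exact hXmeas ((Set.to_countable _).measurableSet)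
  have hbad_le : μ bad ≤ ENNReal.ofReal α := by
    have hsub : bad ⊆ {ω | (X ω : ℝ) < N * p - N * t} ∪
        {ω | N * p + N * t < (X ω : ℝ)} := by
      intro ω hω
      rcases hω with h1 | h2
      · exact Or.inl h1
      · exact Or.inr h2
    calc μ bad ≤ μ ({ω | (X ω : ℝ) < N * p - N * t} ∪
          {ω | N * p + N * t < (X ω : ℝ)}) := measure_mono hsub
      _ ≤ μ {ω | (X ω : ℝ) < N * p - N * t} + μ {ω | N * p + N * t < (X ω : ℝ)} :=
          measure_union_le _ _
      _ ≤ ENNReal.ofReal (∑ k ∈ Finset.range (N + 1),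
            if (k : ℝ) < N * p - N * t then b k else 0) +
          ENNReal.ofReal (∑ k ∈ Finset.range (N + 1),
            if N * p + N * t < (k : ℝ) then b k else 0) :=
          add_le_add (key _) (key _)
      _ ≤ ENNReal.ofReal (α / 2) + ENNReal.ofReal (α / 2) :=
          add_le_add (ENNReal.ofReal_le_ofReal hs1) (ENNReal.ofReal_le_ofReal hs2)
      _ = ENNReal.ofReal α := by
          rw [← ENNReal.ofReal_add (by linarith) (by linarith)]
          congr 1
          ring
  -- the good event contains the complement of the bad event
  have hsub : badᶜ ⊆ {ω | |((X ω : ℝ) / N * εRD + xfl) - xbar| ≤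
      εRD * (t + εB)} := by
    intro ω hω
    simp only [hbad_def, Set.mem_compl_iff, Set.mem_setOf_eq, not_or, not_lt] at hω
    obtain ⟨h1, h2⟩ := hω
    have hXp : |(X ω : ℝ) / N - p| ≤ t := by
      have hdiv1 : p - t ≤ (X ω : ℝ) / N := by rw [le_div_iff₀ hN]; nlinarith
      have hdiv2 : (X ω : ℝ) / N ≤ p + t := by rw [div_le_iff₀ hN]; nlinarith
      rw [abs_le]
      constructor <;> linarith
    have htri : |(X ω : ℝ) / N - r| ≤ t + εB :=
      (abs_sub_le _ p _).trans (add_le_add hXp hbias)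
    have key2 : ((X ω : ℝ) / N * εRD + xfl) - xbar = ((X ω : ℝ) / N - r) * εRD := by
      have hxbar : xbar = r * εRD + xfl := by
        rw [hrdef]
        field_simp
        ring
      rw [hxbar]
      ring
    show |((X ω : ℝ) / N * εRD + xfl) - xbar| ≤ εRD * (t + εB)
    rw [key2, abs_mul, abs_of_pos hε, mul_comm]
    exact mul_le_mul_of_nonneg_left htri hε.le
  calc ENNReal.ofReal (1 - α) = ENNReal.ofReal 1 - ENNReal.ofReal α :=
        ENNReal.ofReal_sub 1 hα0.le
    _ ≤ 1 - μ bad := by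
        rw [ENNReal.ofReal_one]
        exact tsub_le_tsub_left hbad_le 1
    _ = μ badᶜ := (prob_compl_eq_one_sub hbad_meas).symm
    _ ≤ _ := measure_mono hsub
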